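/- If G is a finite simple graph on n vertices with minimum degree δ ≥ 1 and adjacency spectral radius ρ, then the fractional matching number of G is at least nδ²/(ρ² + δ²). -/

import Mathlib

open SimpleGraph

/-- `f` is a fractional matching of `G`: edge weights lie in `[0,1]`, non-edges get
weight `0`, and the weights of edges incident to any vertex sum to at most `1`. -/
def IsFracMatching {V : Type*} [Fintype V] [DecidableEq V]
    (G : SimpleGraph V) (f : Sym2 V → ℝ) : Prop :=
  (∀ e, 0 ≤ f e ∧ f e ≤ 1) ∧ (∀ e, e ∉ G.edgeSet → f e = 0) ∧
    ∀ v : V, (∑ e : Sym2 V, if v ∈ e then f e else 0) ≤ 1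

/-- The fractional matching number: the supremum of total weights of fractional
matchings. -/
noncomputable def fracMatchNum {V : Type*} [Fintype V] [DecidableEq V]
    (G : SimpleGraph V) : ℝ :=
  sSup {x : ℝ | ∃ f : Sym2 V → ℝ, IsFracMatching G f ∧ (∑ e : Sym2 V, f e) = x}

/-- The adjacency spectral radius: the largest real eigenvalue of the adjacency matrix. -/
noncomputable def specRad {V : Type*} [Fintype V] [DecidableEq V]
    (G : SimpleGraph V) [DecidableRel G.Adj] : ℝ :=
  sSup (spectrum ℝ (G.adjMatrix ℝ))

section AuxSpec
open Finset Matrix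
set_option linter.unusedSectionVars false

variable {V : Type*} [Fintype V] [DecidableEq V] (G : SimpleGraph V) [DecidableRel G.Adj]

lemma adj_isHermitian : (G.adjMatrix ℝ).IsHermitian := by
  unfold Matrix.IsHermitian
  ext i j
  simp [Matrix.conjTranspose_apply, SimpleGraph.adj_comm]

lemma adj_symm_sum (u w : V → ℝ) :
    (∑ v, u v * (G.adjMatrix ℝ *ᵥ w) v) = ∑ v, (G.adjMatrix ℝ *ᵥ u) v * w v := by
  have hAsymm : ∀ i j, G.adjMatrix ℝ i j = G.adjMatrix ℝ j i := by
    intro i j; simp [SimpleGraph.adj_comm]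
  calc ∑ v, u v * (G.adjMatrix ℝ *ᵥ w) v
      = ∑ v, ∑ u', u v * (G.adjMatrix ℝ v u' * w u') := by
        simp [Matrix.mulVec, dotProduct, Finset.mul_sum]
    _ = ∑ u', ∑ v, u v * (G.adjMatrix ℝ v u' * w u') := Finset.sum_comm
    _ = ∑ u', (G.adjMatrix ℝ *ᵥ u) u' * w u' := by
        refine Finset.sum_congr rfl fun u' _ => ?_
        simp only [Matrix.mulVec, dotProduct, Finset.sum_mul]
        refine Finset.sum_congr rfl fun v _ => ?_
        rw [hAsymm v u']; ring

lemma inner_eval (u w : EuclideanSpace ℝ V) : (inner ℝ u w : ℝ) = ∑ v, u v * w v := by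
  simp [PiLp.inner_apply, RCLike.inner_apply, mul_comm]

lemma hreprY (x : V → ℝ) :
    ∀ i, (adj_isHermitian G).eigenvectorBasis.repr
        (WithLp.toLp 2 (G.adjMatrix ℝ *ᵥ x) : EuclideanSpace ℝ V) i
      = (adj_isHermitian G).eigenvalues i
        * (adj_isHermitian G).eigenvectorBasis.repr (WithLp.toLp 2 x : EuclideanSpace ℝ V) i := by
  intro i
  set hA := adj_isHermitian G
  set B := hA.eigenvectorBasis with hB
  rw [B.repr_apply_apply, B.repr_apply_apply]
  rw [inner_eval, inner_eval]
  have h3 : (∑ v, (B i : V → ℝ) v * (G.adjMatrix ℝ *ᵥ x) v)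
      = ∑ v, (G.adjMatrix ℝ *ᵥ (B i : V → ℝ)) v * x v := adj_symm_sum G _ _
  have h4 : ∀ v, (G.adjMatrix ℝ *ᵥ (B i : V → ℝ)) v
      = hA.eigenvalues i * (B i : V → ℝ) v := fun v => by
    have := congrFun (hA.mulVec_eigenvectorBasis i) v
    simpa using this
  rw [h3, Finset.mul_sum]
  refine Finset.sum_congr rfl fun v _ => ?_
  rw [h4 v]; ring

lemma exists_coords (x : V → ℝ) :
    ∃ c : V → ℝ,
      (∑ v, x v ^ 2) = (∑ i, c i ^ 2) ∧
      (∑ v, x v * (G.adjMatrix ℝ *ᵥ x) v)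
        = (∑ i, (adj_isHermitian G).eigenvalues i * c i ^ 2) ∧
      (∑ v, ((G.adjMatrix ℝ *ᵥ x) v) ^ 2)
        = (∑ i, ((adj_isHermitian G).eigenvalues i) ^ 2 * c i ^ 2) := by
  classical
  set hA := adj_isHermitian G with hhA
  set B := hA.eigenvectorBasis with hB
  set X : EuclideanSpace ℝ V := (WithLp.toLp 2 x : EuclideanSpace ℝ V) with hX
  set Y : EuclideanSpace ℝ V := (WithLp.toLp 2 (G.adjMatrix ℝ *ᵥ x) : EuclideanSpace ℝ V) with hY
  have hrY : ∀ i, B.repr Y i = hA.eigenvalues i * B.repr X i := hreprY G x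
  have e1 : (inner ℝ X X : ℝ) = inner ℝ (B.repr X) (B.repr X) := (B.repr.inner_map_map X X).symm
  have e2 : (inner ℝ X Y : ℝ) = inner ℝ (B.repr X) (B.repr Y) := (B.repr.inner_map_map X Y).symm
  have e3 : (inner ℝ Y Y : ℝ) = inner ℝ (B.repr Y) (B.repr Y) := (B.repr.inner_map_map Y Y).symm
  rw [inner_eval, inner_eval] at e1 e2 e3
  refine ⟨fun i => B.repr X i, ?_, ?_, ?_⟩
  · calc (∑ v, x v ^ 2) = ∑ v, (X : V → ℝ) v * (X : V → ℝ) v := by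
          refine Finset.sum_congr rfl fun v _ => ?_; rw [pow_two]
      _ = ∑ i, B.repr X i * B.repr X i := e1
      _ = ∑ i, B.repr X i ^ 2 := by
          refine Finset.sum_congr rfl fun i _ => (pow_two _).symm
  · calc (∑ v, x v * (G.adjMatrix ℝ *ᵥ x) v)
        = ∑ v, (X : V → ℝ) v * (Y : V → ℝ) v := rfl
      _ = ∑ i, B.repr X i * B.repr Y i := e2
      _ = ∑ i, hA.eigenvalues i * B.repr X i ^ 2 := by
          refine Finset.sum_congr rfl fun i _ => ?_
          rw [hrY i]; ring
  · calc (∑ v, ((G.adjMatrix ℝ *ᵥ x) v) ^ 2)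
        = ∑ v, (Y : V → ℝ) v * (Y : V → ℝ) v := by
          refine Finset.sum_congr rfl fun v _ => ?_; rw [pow_two]
      _ = ∑ i, B.repr Y i * B.repr Y i := e3
      _ = ∑ i, hA.eigenvalues i ^ 2 * B.repr X i ^ 2 := by
          refine Finset.sum_congr rfl fun i _ => ?_
          rw [hrY i]; ring

lemma eigen_le_specRad (i : V) : (adj_isHermitian G).eigenvalues i ≤ specRad G := by
  apply le_csSup
  · rw [(adj_isHermitian G).spectrum_real_eq_range_eigenvalues]
    exact (Set.finite_range _).bddAbove
  · exact (adj_isHermitian G).eigenvalues_mem_spectrum_real i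

lemma rayleigh_upper (x : V → ℝ) :
    ∑ v, x v * (G.adjMatrix ℝ *ᵥ x) v ≤ specRad G * ∑ v, x v ^ 2 := by
  obtain ⟨c, h1, h2, _⟩ := exists_coords G x
  rw [h1, h2, Finset.mul_sum]
  exact Finset.sum_le_sum fun i _ =>
    mul_le_mul_of_nonneg_right (eigen_le_specRad G i) (sq_nonneg _)

lemma neg_eigen_le_specRad (i : V) : -(adj_isHermitian G).eigenvalues i ≤ specRad G := by
  classical
  set hA := adj_isHermitian G
  set B := hA.eigenvectorBasis
  set w : V → ℝ := (B i : V → ℝ) with hw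
  set w' : V → ℝ := fun v => |w v| with hw'
  have hnorm : (∑ v, w v * w v) = 1 := by
    have h1 : (inner ℝ (B i) (B i) : ℝ) = 1 := by
      rw [real_inner_self_eq_norm_sq, B.orthonormal.1 i]; norm_num
    rw [inner_eval] at h1
    exact h1
  have heig : ∀ v, (G.adjMatrix ℝ *ᵥ w) v = hA.eigenvalues i * w v := fun v => by
    have := congrFun (hA.mulVec_eigenvectorBasis i) v
    simpa using this
  have hup := rayleigh_upper G w'
  have hw'sq : (∑ v, w' v ^ 2) = 1 := by
    rw [← hnorm]
    refine Finset.sum_congr rfl fun v _ => ?_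
    rw [hw']; simp [pow_two, abs_mul_abs_self]
  have hlow : -hA.eigenvalues i ≤ ∑ v, w' v * (G.adjMatrix ℝ *ᵥ w') v := by
    have hterm : ∀ v u : V, -(w v * (G.adjMatrix ℝ v u * w u))
        ≤ w' v * (G.adjMatrix ℝ v u * w' u) := by
      intro v u
      have hA0 : (0:ℝ) ≤ G.adjMatrix ℝ v u := by
        simp only [SimpleGraph.adjMatrix_apply]; positivity
      have : -(w v * w u) ≤ w' v * w' u := by
        rw [hw']
        calc -(w v * w u) ≤ |w v * w u| := neg_le_abs _
          _ = |w v| * |w u| := abs_mul _ _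
      calc -(w v * (G.adjMatrix ℝ v u * w u)) = G.adjMatrix ℝ v u * -(w v * w u) := by ring
        _ ≤ G.adjMatrix ℝ v u * (w' v * w' u) := by
            exact mul_le_mul_of_nonneg_left this hA0
        _ = w' v * (G.adjMatrix ℝ v u * w' u) := by ring
    have hexp : ∀ y : V → ℝ, (∑ v, y v * (G.adjMatrix ℝ *ᵥ y) v)
        = ∑ v, ∑ u, y v * (G.adjMatrix ℝ v u * y u) := by
      intro y
      refine Finset.sum_congr rfl fun v _ => ?_
      simp [Matrix.mulVec, dotProduct, Finset.mul_sum]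
    have hwAw : (∑ v, w v * (G.adjMatrix ℝ *ᵥ w) v) = hA.eigenvalues i := by
      calc (∑ v, w v * (G.adjMatrix ℝ *ᵥ w) v)
          = ∑ v, hA.eigenvalues i * (w v * w v) := by
            refine Finset.sum_congr rfl fun v _ => ?_
            rw [heig v]; ring
        _ = hA.eigenvalues i := by rw [← Finset.mul_sum, hnorm, mul_one]
    calc -hA.eigenvalues i = ∑ v, ∑ u, -(w v * (G.adjMatrix ℝ v u * w u)) := by
          rw [← hwAw, hexp w]
          simp
      _ ≤ ∑ v, ∑ u, w' v * (G.adjMatrix ℝ v u * w' u) :=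
          Finset.sum_le_sum fun v _ => Finset.sum_le_sum fun u _ => hterm v u
      _ = ∑ v, w' v * (G.adjMatrix ℝ *ᵥ w') v := (hexp w').symm
  have := hlow.trans hup
  rw [hw'sq, mul_one] at this
  exact this

lemma rayleigh_sq (x : V → ℝ) :
    ∑ v, ((G.adjMatrix ℝ *ᵥ x) v) ^ 2 ≤ (specRad G) ^ 2 * ∑ v, x v ^ 2 := by
  obtain ⟨c, h1, _, h3⟩ := exists_coords G x
  rw [h1, h3, Finset.mul_sum]
  refine Finset.sum_le_sum fun i _ => mul_le_mul_of_nonneg_right ?_ (sq_nonneg _)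
  have h4 := eigen_le_specRad G i
  have h5 := neg_eigen_le_specRad G i
  exact sq_le_sq' (by linarith) h4

lemma minDegree_le_specRad [Nonempty V] : (G.minDegree : ℝ) ≤ specRad G := by
  have h := rayleigh_upper G (fun _ => 1)
  have h1 : (∑ v, (fun _ => (1:ℝ)) v * (G.adjMatrix ℝ *ᵥ (fun _ => (1:ℝ))) v)
      = ∑ v : V, (G.degree v : ℝ) := by
    refine Finset.sum_congr rfl fun v _ => ?_
    simp [SimpleGraph.adjMatrix_mulVec_apply]
  have h2 : (∑ v : V, ((fun _ => (1:ℝ)) v) ^ 2) = (Fintype.card V : ℝ) := by simp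
  rw [h1, h2] at h
  have h3 : (Fintype.card V : ℝ) * (G.minDegree : ℝ) ≤ ∑ v : V, (G.degree v : ℝ) := by
    calc (Fintype.card V : ℝ) * (G.minDegree : ℝ) = ∑ _v : V, (G.minDegree : ℝ) := by
          rw [Finset.sum_const, Finset.card_univ, nsmul_eq_mul]
      _ ≤ ∑ v : V, (G.degree v : ℝ) :=
          Finset.sum_le_sum fun v _ => by exact_mod_cast G.minDegree_le_degree v
  have hn : (0:ℝ) < Fintype.card V := by
    exact_mod_cast Fintype.card_pos
  have := h3.trans h
  rw [mul_comm (specRad G)] at this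
  exact le_of_mul_le_mul_left this hn

lemma indep_spectral [Nonempty V] (S' : Finset V) :
    (S'.card : ℝ) * (G.minDegree : ℝ) ^ 2
      ≤ ((S'.biUnion (fun v => G.neighborFinset v)).card : ℝ) * (specRad G) ^ 2 := by
  classical
  set x : V → ℝ := fun v => if v ∈ S' then 1 else 0 with hx
  set T := S'.biUnion (fun v => G.neighborFinset v) with hT
  have hAx : ∀ v, (G.adjMatrix ℝ *ᵥ x) v = ((G.neighborFinset v ∩ S').card : ℝ) := by
    intro v
    rw [SimpleGraph.adjMatrix_mulVec_apply, hx]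
    rw [Finset.sum_boole, Finset.filter_mem_eq_inter]
  have hAx0 : ∀ v, 0 ≤ (G.adjMatrix ℝ *ᵥ x) v := fun v => by
    rw [hAx]; positivity
  have hsum : (∑ v, (G.adjMatrix ℝ *ᵥ x) v) = ∑ u ∈ S', (G.degree u : ℝ) := by
    calc (∑ v, (G.adjMatrix ℝ *ᵥ x) v)
        = ∑ v, ∑ u ∈ S', (if u ∈ G.neighborFinset v then (1:ℝ) else 0) := by
          refine Finset.sum_congr rfl fun v _ => ?_
          rw [hAx, Finset.inter_comm, ← Finset.filter_mem_eq_inter, ← Finset.sum_boole]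
      _ = ∑ u ∈ S', ∑ v, (if u ∈ G.neighborFinset v then (1:ℝ) else 0) := Finset.sum_comm
      _ = ∑ u ∈ S', (G.degree u : ℝ) := by
          refine Finset.sum_congr rfl fun u _ => ?_
          have : ∀ v, u ∈ G.neighborFinset v ↔ v ∈ G.neighborFinset u := by
            intro v; rw [SimpleGraph.mem_neighborFinset, SimpleGraph.mem_neighborFinset,
              SimpleGraph.adj_comm]
          simp_rw [this]
          rw [Finset.sum_boole, Finset.filter_mem_eq_inter, Finset.univ_inter,
            SimpleGraph.card_neighborFinset_eq_degree]
  have hsupp : ∀ v, v ∉ T → (G.adjMatrix ℝ *ᵥ x) v = 0 := by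
    intro v hv
    rw [hAx]
    have : G.neighborFinset v ∩ S' = ∅ := by
      rw [Finset.eq_empty_iff_forall_notMem]
      intro u hu
      rw [Finset.mem_inter, SimpleGraph.mem_neighborFinset] at hu
      exact hv (Finset.mem_biUnion.2 ⟨u, hu.2, (SimpleGraph.mem_neighborFinset _ _ _).2 hu.1.symm⟩)
    rw [this]; simp
  have hdeglb : (S'.card : ℝ) * (G.minDegree : ℝ) ≤ ∑ v, (G.adjMatrix ℝ *ᵥ x) v := by
    rw [hsum]
    calc (S'.card : ℝ) * (G.minDegree : ℝ) = ∑ _u ∈ S', (G.minDegree : ℝ) := by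
          rw [Finset.sum_const, nsmul_eq_mul]
      _ ≤ ∑ u ∈ S', (G.degree u : ℝ) :=
          Finset.sum_le_sum fun u _ => by exact_mod_cast G.minDegree_le_degree u
  have hsub : (∑ v, (G.adjMatrix ℝ *ᵥ x) v) = ∑ v ∈ T, (G.adjMatrix ℝ *ᵥ x) v :=
    (Finset.sum_subset (Finset.subset_univ T) fun v _ hv => hsupp v hv).symm
  have hCS := Finset.sum_mul_sq_le_sq_mul_sq T (fun _ => (1:ℝ)) (fun v => (G.adjMatrix ℝ *ᵥ x) v)
  simp only [one_pow, one_mul] at hCS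
  have hsq : (∑ v ∈ T, ((G.adjMatrix ℝ *ᵥ x) v) ^ 2) ≤ ∑ v, ((G.adjMatrix ℝ *ᵥ x) v) ^ 2 :=
    Finset.sum_le_sum_of_subset_of_nonneg (Finset.subset_univ T) fun v _ _ => sq_nonneg _
  have hxsq : (∑ v, x v ^ 2) = (S'.card : ℝ) := by
    have h9 : ∀ v:V, x v ^ 2 = (if v ∈ S' then (1:ℝ) else 0) := by
      intro v; by_cases h : v ∈ S' <;> simp [hx, h]
    simp_rw [h9]
    rw [Finset.sum_boole, Finset.filter_mem_eq_inter, Finset.univ_inter]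
  have hray := rayleigh_sq G x
  rw [hxsq] at hray
  set s := (S'.card : ℝ)
  set t := (T.card : ℝ)
  set δ := (G.minDegree : ℝ)
  set ρ := specRad G
  have hs0 : 0 ≤ s := Nat.cast_nonneg _
  have hδ0 : (0:ℝ) ≤ δ := Nat.cast_nonneg _
  have hkey : (s * δ)^2 ≤ t * (ρ^2 * s) := by
    calc (s * δ)^2 ≤ (∑ v, (G.adjMatrix ℝ *ᵥ x) v)^2 := by
          apply sq_le_sq' <;> nlinarith [Finset.sum_nonneg fun v (_ : v ∈ Finset.univ) => hAx0 v]
      _ = (∑ v ∈ T, (G.adjMatrix ℝ *ᵥ x) v)^2 := by rw [hsub]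
      _ ≤ (∑ _v ∈ T, (1:ℝ)) * ∑ v ∈ T, ((G.adjMatrix ℝ *ᵥ x) v)^2 := hCS
      _ = t * ∑ v ∈ T, ((G.adjMatrix ℝ *ᵥ x) v)^2 := by
          rw [Finset.sum_const, nsmul_eq_mul, mul_one]
      _ ≤ t * ∑ v, ((G.adjMatrix ℝ *ᵥ x) v)^2 := by
          apply mul_le_mul_of_nonneg_left hsq (Nat.cast_nonneg _)
      _ ≤ t * (ρ^2 * s) := mul_le_mul_of_nonneg_left hray (Nat.cast_nonneg _)
  rcases eq_or_lt_of_le hs0 with h0 | hs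
  · rw [← h0]
    have ht0 : 0 ≤ t := Nat.cast_nonneg _
    nlinarith [sq_nonneg ρ]
  · have : s * (s * δ^2) ≤ s * (t * ρ^2) := by nlinarith
    exact le_of_mul_le_mul_left this hs

lemma defect_bound [Nonempty V] (hδ1 : 1 ≤ G.minDegree) (S : Finset V) :
    (S.card : ℝ) ≤ ((S.biUnion (fun v => G.neighborFinset v)).card : ℝ)
      + (Fintype.card V : ℝ) * ((specRad G)^2 - (G.minDegree:ℝ)^2)
        / ((specRad G)^2 + (G.minDegree:ℝ)^2) := by
  classical
  set ρ := specRad G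
  set δ := (G.minDegree : ℝ) with hδdef
  set n := (Fintype.card V : ℝ)
  have hρδ : δ ≤ ρ := minDegree_le_specRad G
  have hδ1' : (1:ℝ) ≤ δ := by show (1:ℝ) ≤ (G.minDegree:ℝ); exact_mod_cast hδ1
  have hden : (0:ℝ) < ρ^2 + δ^2 := by nlinarith
  set S' : Finset V := S.filter (fun v => ∀ u ∈ S, ¬ G.Adj v u) with hS'
  set NS := S.biUnion (fun v => G.neighborFinset v) with hNS
  set NS' := S'.biUnion (fun v => G.neighborFinset v) with hNS'
  have hS'S : S' ⊆ S := Finset.filter_subset _ _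
  have hprop : ∀ v ∈ S', ∀ u ∈ S, ¬ G.Adj v u := fun v hv =>
    (Finset.mem_filter.1 hv).2
  -- N S' and S ∩ N S are disjoint subsets of N S
  have hsub1 : NS' ⊆ NS := Finset.biUnion_subset_biUnion_of_subset_left _ hS'S
  have hdisj1 : Disjoint NS' (S ∩ NS) := by
    rw [Finset.disjoint_left]
    intro w hw hw2
    obtain ⟨u, hu, hw'⟩ := Finset.mem_biUnion.1 hw
    rw [SimpleGraph.mem_neighborFinset] at hw'
    exact hprop u hu w (Finset.mem_inter.1 hw2).1 hw'
  have hcard1 : NS'.card + (S ∩ NS).card ≤ NS.card := by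
    rw [← Finset.card_union_of_disjoint hdisj1]
    apply Finset.card_le_card
    apply Finset.union_subset hsub1 Finset.inter_subset_right
  -- S ⊆ S' ∪ (S ∩ N S)
  have hcard2 : S.card ≤ S'.card + (S ∩ NS).card := by
    calc S.card ≤ (S' ∪ (S ∩ NS)).card := by
          apply Finset.card_le_card
          intro v hv
          rw [Finset.mem_union]
          by_cases h : ∀ u ∈ S, ¬ G.Adj v u
          · exact Or.inl (Finset.mem_filter.2 ⟨hv, h⟩)
          · push_neg at h
            obtain ⟨u, hu, hadj⟩ := h
            refine Or.inr (Finset.mem_inter.2 ⟨hv, Finset.mem_biUnion.2 ⟨u, hu, ?_⟩⟩)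
            rw [SimpleGraph.mem_neighborFinset]
            exact hadj.symm
      _ ≤ S'.card + (S ∩ NS).card := Finset.card_union_le _ _
  -- S' and N S' are disjoint
  have hdisj2 : Disjoint S' NS' := by
    rw [Finset.disjoint_left]
    intro v hv hv2
    obtain ⟨u, hu, hv'⟩ := Finset.mem_biUnion.1 hv2
    rw [SimpleGraph.mem_neighborFinset] at hv'
    exact hprop u hu v (hS'S hv) hv'
  have hst : S'.card + NS'.card ≤ Fintype.card V := by
    rw [← Finset.card_union_of_disjoint hdisj2]
    exact Finset.card_le_univ _
  have hspec := indep_spectral G S'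
  -- algebra
  set s := (S'.card : ℝ)
  set t := (NS'.card : ℝ)
  have hgoal : ((S.card : ℝ) - (NS.card : ℝ)) * (ρ^2 + δ^2) ≤ n * (ρ^2 - δ^2) := by
    have h1 : (S.card : ℝ) - (NS.card : ℝ) ≤ s - t := by
      have c1 : (NS'.card : ℝ) + ((S ∩ NS).card : ℝ) ≤ (NS.card : ℝ) := by exact_mod_cast hcard1
      have c2 : (S.card : ℝ) ≤ (S'.card : ℝ) + ((S ∩ NS).card : ℝ) := by exact_mod_cast hcard2
      linarith
    have h2 : s + t ≤ n := by show (S'.card:ℝ) + (NS'.card:ℝ) ≤ (Fintype.card V:ℝ); exact_mod_cast hst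
    have h3 : 0 ≤ ρ^2 - δ^2 := by nlinarith
    have h4 : (s + t) * (ρ^2 - δ^2) ≤ n * (ρ^2 - δ^2) := mul_le_mul_of_nonneg_right h2 h3
    have h5 : ((S.card : ℝ) - (NS.card : ℝ)) * (ρ^2 + δ^2) ≤ (s - t) * (ρ^2 + δ^2) :=
      mul_le_mul_of_nonneg_right h1 (le_of_lt hden)
    nlinarith [hspec]
  rw [← sub_le_iff_le_add', le_div_iff₀ hden]
  exact hgoal



end AuxSpec

section AuxMatch
open Finset Matrix
set_option linter.unusedSectionVars false

variable {V : Type*} [Fintype V] [DecidableEq V] (G : SimpleGraph V) [DecidableRel G.Adj]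

lemma fiber_sum {β : Type*} [Fintype β] [DecidableEq β] (A : Finset V) (m : V → β) (h : β → ℝ) :
    (∑ e : β, ((A.filter (fun u => m u = e)).card : ℝ) * h e) = ∑ u ∈ A, h (m u) := by
  have h1 : ∀ e : β, ((A.filter (fun u => m u = e)).card : ℝ) * h e
      = ∑ u ∈ A, (if m u = e then h e else 0) := by
    intro e
    rw [← Finset.sum_filter, Finset.sum_const, nsmul_eq_mul]
  simp_rw [h1]
  rw [Finset.sum_comm]
  refine Finset.sum_congr rfl fun u _ => ?_
  simp

lemma frac_from_hall (k : ℕ)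
    (hk : ∀ S : Finset V, S.card ≤ (S.biUnion (fun v => G.neighborFinset v)).card + k) :
    ∃ f : Sym2 V → ℝ, IsFracMatching G f ∧
      ((Fintype.card V : ℝ) - k) / 2 ≤ ∑ e : Sym2 V, f e := by
  classical
  -- Hall with defect k
  set t : V → Finset (V ⊕ Fin k) :=
    fun v => (G.neighborFinset v).image Sum.inl ∪ Finset.univ.image Sum.inr with ht
  have hhall : ∀ s : Finset V, s.card ≤ (s.biUnion t).card := by
    intro s
    rcases s.eq_empty_or_nonempty with rfl | hs
    · simp
    · have heq : s.biUnion t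
          = ((s.biUnion (fun v => G.neighborFinset v)).image Sum.inl)
            ∪ (Finset.univ.image Sum.inr) := by
        ext w
        simp only [ht, Finset.mem_biUnion, Finset.mem_union, Finset.mem_image]
        constructor
        · rintro ⟨v, hv, hw⟩
          rcases hw with ⟨u, hu, rfl⟩ | ⟨j, hj, rfl⟩
          · exact Or.inl ⟨u, ⟨v, hv, hu⟩, rfl⟩
          · exact Or.inr ⟨j, hj, rfl⟩
        · rintro (⟨u, ⟨v, hv, hu⟩, rfl⟩ | ⟨j, hj, rfl⟩)
          · exact ⟨v, hv, Or.inl ⟨u, hu, rfl⟩⟩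
          · obtain ⟨v, hv⟩ := hs
            exact ⟨v, hv, Or.inr ⟨j, hj, rfl⟩⟩
      rw [heq, Finset.card_union_of_disjoint]
      · rw [Finset.card_image_of_injective _ Sum.inl_injective,
          Finset.card_image_of_injective _ Sum.inr_injective, Finset.card_univ,
          Fintype.card_fin]
        exact hk s
      · rw [Finset.disjoint_left]
        intro w hw1 hw2
        obtain ⟨u, _, rfl⟩ := Finset.mem_image.1 hw1
        obtain ⟨j, _, hj⟩ := Finset.mem_image.1 hw2
        exact Sum.inl_ne_inr hj.symm
  obtain ⟨F, hFinj, hFmem⟩ := (Finset.all_card_le_biUnion_card_iff_exists_injective t).1 hhall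
  set A : Finset V := Finset.univ.filter (fun v => ∃ w, F v = Sum.inl w) with hA
  set φ : V → V := fun v => Sum.elim id (fun _ => v) (F v) with hφ
  have hφadj : ∀ v ∈ A, G.Adj v (φ v) := by
    intro v hv
    obtain ⟨w, hw⟩ := (Finset.mem_filter.1 hv).2
    have hmem := hFmem v
    rw [hw] at hmem
    have hφv : φ v = w := by simp only [hφ]; rw [hw]; rfl
    simp only [ht, Finset.mem_union, Finset.mem_image] at hmem
    rcases hmem with ⟨u, hu, hq⟩ | ⟨j, _, hq⟩
    · obtain rfl : u = w := Sum.inl_injective hq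
      rw [hφv]
      exact (SimpleGraph.mem_neighborFinset _ _ _).1 hu
    · exact absurd hq (Sum.inl_ne_inr ∘ Eq.symm)
  have hFA : ∀ v ∈ A, F v = Sum.inl (φ v) := by
    intro v hv
    obtain ⟨w, hw⟩ := (Finset.mem_filter.1 hv).2
    have hφv : φ v = w := by simp only [hφ]; rw [hw]; rfl
    rw [hφv]; exact hw
  have hφinj : ∀ u ∈ A, ∀ w ∈ A, φ u = φ w → u = w := by
    intro u hu w hw hq
    apply hFinj
    rw [hFA u hu, hFA w hw, hq]
  have hAcard : Fintype.card V ≤ A.card + k := by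
    have hcompl : Aᶜ.card ≤ k := by
      have hmaps : ∀ v ∈ Aᶜ, F v ∈ Finset.univ.image (Sum.inr : Fin k → V ⊕ Fin k) := by
        intro v hv
        rw [Finset.mem_compl, hA, Finset.mem_filter] at hv
        push_neg at hv
        have hv' := hv (Finset.mem_univ v)
        cases hFv : F v with
        | inl w => exact absurd hFv (hv' w)
        | inr j => exact Finset.mem_image.2 ⟨j, Finset.mem_univ j, rfl⟩
      have := Finset.card_le_card_of_injOn F hmaps (fun u _ w _ h => hFinj h)
      rwa [Finset.card_image_of_injective _ Sum.inr_injective, Finset.card_univ,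
        Fintype.card_fin] at this
    have := Finset.card_compl_add_card A
    omega
  set m : V → Sym2 V := fun u => s(u, φ u) with hm
  set g : Sym2 V → ℝ := fun e => ((A.filter (fun u => m u = e)).card : ℝ) / 2 with hg
  have hcard2 : ∀ e : Sym2 V, (A.filter (fun u => m u = e)).card ≤ 2 := by
    intro e
    induction e with
    | _ a b =>
      calc (A.filter (fun u => m u = s(a, b))).card ≤ ({a, b} : Finset V).card := by
            apply Finset.card_le_card
            intro u hu
            have hq := (Finset.mem_filter.1 hu).2
            have : u ∈ m u := by rw [hm]; exact Sym2.mem_mk_left _ _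
            rw [hq, Sym2.mem_iff] at this
            simpa [Finset.mem_insert, Finset.mem_singleton] using this
        _ ≤ 2 := Finset.card_insert_le _ _ |>.trans (by simp)
  have hedge : ∀ u ∈ A, m u ∈ G.edgeSet := by
    intro u hu
    rw [hm, SimpleGraph.mem_edgeSet]
    exact hφadj u hu
  refine ⟨g, ⟨?_, ?_, ?_⟩, ?_⟩
  · intro e
    constructor
    · simp only [hg]; positivity
    · simp only [hg]
      have := hcard2 e
      have h2 : ((A.filter (fun u => m u = e)).card : ℝ) ≤ 2 := by exact_mod_cast this
      linarith
  · intro e he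
    simp only [hg]
    have : A.filter (fun u => m u = e) = ∅ := by
      rw [Finset.filter_eq_empty_iff]
      intro u hu hq
      exact he (hq ▸ hedge u hu)
    rw [this]; simp
  · intro v
    have hstep : ∀ e : Sym2 V, (if v ∈ e then g e else 0)
        = ((A.filter (fun u => m u = e)).card : ℝ) * (if v ∈ e then (1/2 : ℝ) else 0) := by
      intro e
      simp only [hg]
      split_ifs
      · ring
      · ring
    simp_rw [hstep]
    rw [fiber_sum A m (fun e => if v ∈ e then (1/2 : ℝ) else 0)]
    have hsplit : (∑ u ∈ A, (if v ∈ m u then (1/2:ℝ) else 0))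
        = ((A.filter (fun u => v ∈ m u)).card : ℝ) * (1/2) := by
      rw [← Finset.sum_filter, Finset.sum_const, nsmul_eq_mul]
    rw [hsplit]
    have hc : (A.filter (fun u => v ∈ m u)).card ≤ 2 := by
      calc (A.filter (fun u => v ∈ m u)).card
          ≤ (insert v (A.filter (fun u => φ u = v))).card := by
            apply Finset.card_le_card
            intro u hu
            obtain ⟨huA, hum⟩ := Finset.mem_filter.1 hu
            rw [hm, Sym2.mem_iff] at hum
            rcases hum with h | h
            · rw [h]; exact Finset.mem_insert_self _ _
            · exact Finset.mem_insert_of_mem (Finset.mem_filter.2 ⟨huA, h.symm⟩)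
        _ ≤ (A.filter (fun u => φ u = v)).card + 1 := Finset.card_insert_le _ _
        _ ≤ 2 := by
            have : (A.filter (fun u => φ u = v)).card ≤ 1 := by
              rw [Finset.card_le_one]
              intro a ha b hb
              obtain ⟨haA, ha2⟩ := Finset.mem_filter.1 ha
              obtain ⟨hbA, hb2⟩ := Finset.mem_filter.1 hb
              exact hφinj a haA b hbA (ha2.trans hb2.symm)
            omega
    have hcr : ((A.filter (fun u => v ∈ m u)).card : ℝ) ≤ 2 := by exact_mod_cast hc
    linarith
  · have htot : (∑ e : Sym2 V, g e) = (A.card : ℝ) / 2 := by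
      have hstep : ∀ e : Sym2 V, g e
          = ((A.filter (fun u => m u = e)).card : ℝ) * (1/2 : ℝ) := by
        intro e; simp only [hg]; ring
      simp_rw [hstep]
      rw [fiber_sum A m (fun _ => (1/2 : ℝ)), Finset.sum_const, nsmul_eq_mul]
      ring
    rw [htot]
    have : (Fintype.card V : ℝ) ≤ (A.card : ℝ) + k := by exact_mod_cast hAcard
    linarith



end AuxMatch


/-- O's bound: `α*'(G) ≥ n δ² / (ρ² + δ²)`. -/
theorem fracMatchNum_lower_bound {V : Type*} [Fintype V] [DecidableEq V]
    (G : SimpleGraph V) [DecidableRel G.Adj]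
    (n : ℕ) (hn : n = Fintype.card V) (δ : ℕ) (hδ : δ = G.minDegree) (hδ1 : 1 ≤ δ) :
    (n : ℝ) * (δ : ℝ) ^ 2 / ((specRad G) ^ 2 + (δ : ℝ) ^ 2) ≤ fracMatchNum G := by
  classical
  subst hn hδ
  have hne : Nonempty V := by
    by_contra h
    rw [not_nonempty_iff] at h
    have h0 : G.minDegree = 0 := by
      simp [SimpleGraph.minDegree, Finset.univ_eq_empty]
    omega
  set n := Fintype.card V with hncard
  set ρ := specRad G with hρ
  set δ' : ℝ := (G.minDegree : ℝ) with hδ'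
  have hρδ : δ' ≤ ρ := minDegree_le_specRad G
  have hδ1' : (1:ℝ) ≤ δ' := by rw [hδ']; exact_mod_cast hδ1
  have hden : (0:ℝ) < ρ^2 + δ'^2 := by nlinarith
  set T : ℝ := (n : ℝ) * δ'^2 / (ρ^2 + δ'^2) with hT
  have hT0 : 0 ≤ T := by
    rw [hT]; positivity
  have h2T : 2 * T ≤ (n : ℝ) := by
    rw [hT, ← mul_div_assoc, div_le_iff₀ hden]
    have hsq : δ'^2 ≤ ρ^2 := by nlinarith
    nlinarith [mul_nonneg (Nat.cast_nonneg (α := ℝ) n) (sub_nonneg.2 hsq)]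
  have hceil_n : ⌈2 * T⌉₊ ≤ n := Nat.ceil_le.2 (by exact_mod_cast h2T)
  set k : ℕ := n - ⌈2 * T⌉₊ with hk
  have hk_hall : ∀ S : Finset V, S.card ≤ (S.biUnion (fun v => G.neighborFinset v)).card + k := by
    intro S
    have hdb := defect_bound G hδ1 S
    set NS := S.biUnion (fun v => G.neighborFinset v)
    have hid : (n : ℝ) * (ρ^2 - δ'^2) / (ρ^2 + δ'^2) = (n : ℝ) - 2 * T := by
      rw [hT]; field_simp; ring
    rw [hid] at hdb
    have hSn : S.card ≤ NS.card + n := by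
      have h1 : (S.card : ℝ) ≤ (NS.card : ℝ) + (n : ℝ) := by linarith
      exact_mod_cast h1
    have h2 : 2 * T ≤ ((NS.card + n - S.card : ℕ) : ℝ) := by
      rw [Nat.cast_sub hSn]
      push_cast
      linarith
    have hc2 : ⌈2 * T⌉₊ ≤ NS.card + n - S.card := Nat.ceil_le.2 h2
    omega
  obtain ⟨f, hf, hge⟩ := frac_from_hall G k hk_hall
  have hnk : ((n : ℝ) - (k : ℝ)) / 2 = (⌈2 * T⌉₊ : ℝ) / 2 := by
    rw [hk, Nat.cast_sub hceil_n]
    ring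
  have hTle : T ≤ ∑ e : Sym2 V, f e := by
    have h3 : 2 * T ≤ (⌈2 * T⌉₊ : ℝ) := Nat.le_ceil _
    rw [hnk] at hge
    linarith
  refine hTle.trans ?_
  apply le_csSup
  · refine ⟨(Fintype.card (Sym2 V) : ℝ), ?_⟩
    rintro x ⟨f', hf', rfl⟩
    calc (∑ e : Sym2 V, f' e) ≤ ∑ _e : Sym2 V, (1:ℝ) :=
          Finset.sum_le_sum fun e _ => (hf'.1 e).2
      _ = (Fintype.card (Sym2 V) : ℝ) := by
          rw [Finset.sum_const, Finset.card_univ, nsmul_eq_mul, mul_one]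
  · exact ⟨f, hf, rfl⟩
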